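/- arXiv:1301.0695 — 5 statements merged into one kernel-verified Lean document; each statement's English description precedes it below -/
import Mathlib

section
/- Let L/k be a Galois field extension of degree 2, let σ be the nontrivial element of Gal(L|k), and let ν ∈ k be nonzero. Let M be the 2×2 matrix over L with rows (0, ν) and (1, 0) (entries taken via the embedding of k into L). Then there exist an invertible 2×2 matrix N over L and an element λ ∈ L satisfying N^σ · M = λ • N (where N^σ denotes the matrix obtained by applying σ to every entry of N) if and only if there exists λ ∈ L with σ(λ)·λ = ν, i.e. if and only if ν is a norm for the extension L/k. -/
/-- Let `L/k` be a Galois extension of degree `2` with nontrivial automorphism `σ`,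
and let `ν ∈ k` be nonzero.  For the matrix `M = !![0, ν; 1, 0]` over `L`, there exist
an invertible matrix `N` over `L` and `λ ∈ L` with `N^σ * M = λ • N` if and only if
`ν` is a norm for the extension `L/k`, i.e. `σ(λ)·λ = ν` for some `λ ∈ L`. -/
theorem stmt2 {k L : Type*} [Field k] [Field L] [Algebra k L] [IsGalois k L]
    (hdeg : Module.finrank k L = 2) (σ : L ≃ₐ[k] L) (hσ : σ ≠ 1)
    (ν : k) (hν : ν ≠ 0) :
    (∃ (N : Matrix (Fin 2) (Fin 2) L) (lam : L), IsUnit N.det ∧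
        N.map σ * !![0, algebraMap k L ν; 1, 0] = lam • N) ↔
      ∃ lam : L, σ lam * lam = algebraMap k L ν := by
  have hfd : FiniteDimensional k L := Module.finite_of_finrank_pos (by omega)
  have hcard : Fintype.card (L ≃ₐ[k] L) = 2 := by
    rw [← Nat.card_eq_fintype_card, IsGalois.card_aut_eq_finrank, hdeg]
  have hσ2 : ∀ x : L, σ (σ x) = x := by
    intro x
    have h : σ ^ 2 = 1 := by rw [← hcard]; exact pow_card_eq_one
    have h' : (σ * σ) x = (1 : L ≃ₐ[k] L) x := by rw [← sq, h]
    simpa using h'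
  set νL : L := algebraMap k L ν with hνLdef
  have hνL : νL ≠ 0 := by
    simpa [hνLdef] using (map_ne_zero (algebraMap k L)).mpr hν
  constructor
  · rintro ⟨N, lam, hdet, hEq⟩
    have hcol1 : ∀ i, σ (N i 1) = lam * N i 0 := by
      intro i
      have := congrFun (congrFun hEq i) 0
      simpa [Matrix.mul_apply, Fin.sum_univ_two, Matrix.smul_apply, smul_eq_mul] using this
    have hcol2 : ∀ i, σ (N i 0) * νL = lam * N i 1 := by
      intro i
      have := congrFun (congrFun hEq i) 1
      simpa [Matrix.mul_apply, Fin.sum_univ_two, Matrix.smul_apply, smul_eq_mul] using this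
    have hex : ∃ i, N i 0 ≠ 0 := by
      by_contra h
      push_neg at h
      have : N.det = 0 := by
        rw [Matrix.det_fin_two, h 0, h 1]; ring
      exact hdet.ne_zero this
    obtain ⟨i, hi⟩ := hex
    have h1 : N i 1 = σ lam * σ (N i 0) := by
      have := congrArg σ (hcol1 i)
      rw [hσ2] at this
      rw [this, map_mul]
    have h2 : σ (N i 0) * νL = lam * (σ lam * σ (N i 0)) := by
      rw [← h1]; exact hcol2 i
    have hNi : σ (N i 0) ≠ 0 := (map_ne_zero σ).mpr hi
    refine ⟨lam, ?_⟩
    have : νL = σ lam * lam := by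
      field_simp at h2
      -- h2 : σ (N i 0) * νL = lam * (σ lam * σ (N i 0))
      have := mul_left_cancel₀ hNi (by linear_combination (σ (N i 0)) * h2 : σ (N i 0) * νL = σ (N i 0) * (σ lam * lam))
      exact this
    exact this.symm
  · rintro ⟨lam, hlam⟩
    have hlam0 : lam ≠ 0 := by
      intro h; rw [h, mul_zero] at hlam; exact hνL hlam.symm
    obtain ⟨a, ha⟩ : ∃ a, σ a ≠ a := by
      by_contra h; push_neg at h; exact hσ (AlgEquiv.ext h)
    refine ⟨!![1, σ lam; a, σ lam * σ a], lam, ?_, ?_⟩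
    · rw [Matrix.det_fin_two_of]
      have : (1 : L) * (σ lam * σ a) - σ lam * a = σ lam * (σ a - a) := by ring
      rw [this]
      exact (mul_ne_zero ((map_ne_zero σ).mpr hlam0) (sub_ne_zero.mpr ha)).isUnit
    · ext i j
      fin_cases i <;> fin_cases j <;>
        simp [Matrix.mul_apply, Fin.sum_univ_two, Matrix.smul_apply, smul_eq_mul, hσ2,
          map_mul] <;>
        first
          | linear_combination -hlam
          | linear_combination (-σ a) * hlam
end

section
/- Let K be a field of characteristic different from 2, let n be a natural number, and let s, t, s', t' : {1,…,n} → K. Suppose that s_i + t_i = s'_i + t'_i for all i, and that s_i t_j + s_j t_i = s'_i t'_j + s'_j t'_i for all i, j (in particular, taking i = j, 2 s_i t_i = 2 s'_i t'_i for all i). Then either s'_i = s_i and t'_i = t_i for all i, or s'_i = t_i and t'_i = s_i for all i. -/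
/-- Over a field of characteristic `≠ 2`, the symmetric functions `s i + t i` and
`s i * t j + s j * t i` determine the tuple `(s, t)` up to the simultaneous
exchange `s i ↔ t i` for all `i`. -/
theorem stmt3 {K : Type*} [Field K] (hchar : (2 : K) ≠ 0) (n : ℕ)
    (s t s' t' : Fin n → K)
    (h1 : ∀ i, s i + t i = s' i + t' i)
    (h2 : ∀ i j, s i * t j + s j * t i = s' i * t' j + s' j * t' i) :
    (∀ i, s' i = s i ∧ t' i = t i) ∨ (∀ i, s' i = t i ∧ t' i = s i) := by
  have key : ∀ i, s i * t i = s' i * t' i := by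
    intro i
    have h : 2 * (s i * t i) = 2 * (s' i * t' i) := by linear_combination h2 i i
    exact mul_left_cancel₀ hchar h
  have P : ∀ i, (s' i = s i ∧ t' i = t i) ∨ (s' i = t i ∧ t' i = s i) := by
    intro i
    have hz : (s' i - s i) * (s' i - t i) = 0 := by
      linear_combination (- s' i) * h1 i + key i
    rcases mul_eq_zero.1 hz with h | h
    · left
      have hs : s' i = s i := sub_eq_zero.1 h
      refine ⟨hs, ?_⟩
      linear_combination - h1 i - hs
    · right
      have hs : s' i = t i := sub_eq_zero.1 h
      refine ⟨hs, ?_⟩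
      linear_combination - h1 i - hs
  by_cases hall : ∀ i, s' i = s i
  · left
    intro i
    refine ⟨hall i, ?_⟩
    linear_combination - h1 i - hall i
  · right
    push_neg at hall
    obtain ⟨i0, hi0⟩ := hall
    have hswap : s' i0 = t i0 ∧ t' i0 = s i0 := by
      rcases P i0 with h | h
      · exact absurd h.1 hi0
      · exact h
    have hne : s i0 ≠ t i0 := fun h => hi0 (hswap.1.trans h.symm)
    intro j
    rcases P j with h | h
    · have heq := h2 i0 j
      rw [hswap.1, hswap.2, h.1, h.2] at heq
      have hz : (s i0 - t i0) * (t j - s j) = 0 := by linear_combination heq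
      have hj : t j = s j := by
        rcases mul_eq_zero.1 hz with hh | hh
        · exact absurd (sub_eq_zero.1 hh) hne
        · exact sub_eq_zero.1 hh
      exact ⟨by rw [h.1, hj], by rw [h.2, hj]⟩
    · exact h
end

section
/- Let r ≥ 2 be an integer and let c : {1,…,r} → ℤ be such that c_i > 0 for some index i and c_j < 0 for some index j. Then there exists a ℤ-basis b_1, …, b_r of the free module ℤ^r such that every entry of every basis vector b_t is strictly positive, such that Σ_j c_j·(b_t)_j = 0 for all t ≤ r−1, and such that b_1, …, b_{r−1} form a ℤ-basis of the subgroup {v ∈ ℤ^r : Σ_j c_j·v_j = 0}. -/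
set_option maxHeartbeats 1600000

/-- If an integer vector `c` (of length `r ≥ 2`) has both a strictly positive and a
strictly negative entry, then `ℤ^r` has a basis `b 0, …, b (r-1)` all of whose
vectors have strictly positive entries, such that the first `r - 1` basis vectors
lie in the kernel `{v : ∑ c j * v j = 0}` and form a `ℤ`-basis of this kernel
(they are part of a basis of `ℤ^r`, hence linearly independent, and they span
the kernel). -/
theorem stmt6 (r : ℕ) (hr : 2 ≤ r) (c : Fin r → ℤ)
    (hpos : ∃ i, 0 < c i) (hneg : ∃ j, c j < 0) :
    ∃ (b : Fin r → Fin r → ℤ) (B : Module.Basis (Fin r) ℤ (Fin r → ℤ)),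
      (∀ t, B t = b t) ∧
      (∀ t i, 0 < b t i) ∧
      (∀ t : Fin r, (t : ℕ) < r - 1 → ∑ j, c j * b t j = 0) ∧
      (∀ v : Fin r → ℤ, ∑ j, c j * v j = 0 →
        v ∈ Submodule.span ℤ
          (Set.range fun t : Fin (r - 1) => b (Fin.castLE (Nat.sub_le r 1) t))) := by
  classical
  haveI : NeZero r := ⟨by omega⟩
  obtain ⟨i₀, hi₀⟩ := hpos
  obtain ⟨j₀, hj₀⟩ := hneg
  -- the linear functional
  set F : (Fin r → ℤ) →ₗ[ℤ] ℤ := ∑ j : Fin r, c j • LinearMap.proj j with hFdef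
  have hFapp : ∀ v : Fin r → ℤ, F v = ∑ j, c j * v j := by
    intro v
    simp [hFdef, LinearMap.sum_apply, LinearMap.smul_apply, LinearMap.proj_apply, smul_eq_mul]
  set K : Submodule ℤ (Fin r → ℤ) := LinearMap.ker F with hKdef
  -- the positive primitive kernel vector u
  set P : ℤ := ∑ j, max (c j) 0 with hPdef
  set Nn : ℤ := ∑ j, max (-c j) 0 with hNdef
  have hP : 0 < P := by
    refine Finset.sum_pos' (fun j _ => le_max_right _ _) ⟨i₀, Finset.mem_univ _, ?_⟩
    exact lt_max_iff.2 (Or.inl hi₀)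
  have hN : 0 < Nn := by
    refine Finset.sum_pos' (fun j _ => le_max_right _ _) ⟨j₀, Finset.mem_univ _, ?_⟩
    exact lt_max_iff.2 (Or.inl (by omega))
  set d : ℤ := (Int.gcd P Nn : ℤ) with hddef
  have hd : 0 < d := by
    have : Int.gcd P Nn ≠ 0 := by
      simp [Int.gcd_eq_zero_iff]
      intro h; omega
    exact Int.natCast_pos.mpr (Nat.pos_of_ne_zero this)
  set N' : ℤ := Nn / d with hN'def
  set P' : ℤ := P / d with hP'def
  have hdN : d ∣ Nn := Int.gcd_dvd_right P Nn
  have hdP : d ∣ P := Int.gcd_dvd_left P Nn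
  have hNeq : Nn = d * N' := (Int.mul_ediv_cancel' hdN).symm
  have hPeq : P = d * P' := (Int.mul_ediv_cancel' hdP).symm
  have hN' : 0 < N' := by nlinarith
  have hP' : 0 < P' := by nlinarith
  set u : Fin r → ℤ := fun j => if 0 ≤ c j then N' else P' with hudef
  have hu_pos : ∀ j, 0 < u j := by
    intro j; simp only [hudef]; split <;> assumption
  have hu1 : ∀ j, 1 ≤ u j := fun j => hu_pos j
  have huF : F u = 0 := by
    rw [hFapp]
    have h1 : ∀ j, c j * u j = if 0 ≤ c j then c j * N' else c j * P' := by
      intro j; simp only [hudef, mul_ite]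
    rw [Finset.sum_congr rfl fun j _ => h1 j, Finset.sum_ite, ← Finset.sum_mul, ← Finset.sum_mul]
    have hA : ∑ j ∈ Finset.univ.filter (fun j => 0 ≤ c j), c j = P := by
      rw [hPdef, ← Finset.sum_filter_add_sum_filter_not Finset.univ (fun j => 0 ≤ c j) (fun j => max (c j) 0)]
      have e1 : ∑ j ∈ Finset.univ.filter (fun j => 0 ≤ c j), max (c j) 0
          = ∑ j ∈ Finset.univ.filter (fun j => 0 ≤ c j), c j :=
        Finset.sum_congr rfl (fun j hj => by simp only [Finset.mem_filter] at hj; omega)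
      have e2 : ∑ j ∈ Finset.univ.filter (fun j => ¬ 0 ≤ c j), max (c j) 0 = 0 :=
        Finset.sum_eq_zero (fun j hj => by simp only [Finset.mem_filter] at hj; omega)
      rw [e1, e2, add_zero]
    have hB : ∑ j ∈ Finset.univ.filter (fun j => ¬ 0 ≤ c j), c j = -Nn := by
      have : Nn = ∑ j ∈ Finset.univ.filter (fun j => ¬ 0 ≤ c j), (- c j) := by
        rw [hNdef, ← Finset.sum_filter_add_sum_filter_not Finset.univ (fun j => ¬ 0 ≤ c j) (fun j => max (-c j) 0)]
        have e1 : ∑ j ∈ Finset.univ.filter (fun j => ¬ 0 ≤ c j), max (-c j) 0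
            = ∑ j ∈ Finset.univ.filter (fun j => ¬ 0 ≤ c j), (- c j) :=
          Finset.sum_congr rfl (fun j hj => by simp only [Finset.mem_filter] at hj; omega)
        have e2 : ∑ j ∈ Finset.univ.filter (fun j => ¬ ¬ 0 ≤ c j), max (-c j) 0 = 0 :=
          Finset.sum_eq_zero (fun j hj => by simp only [Finset.mem_filter] at hj; omega)
        rw [e1, e2, add_zero]
      rw [show ∑ j ∈ Finset.univ.filter (fun j => ¬ 0 ≤ c j), c j
          = - ∑ j ∈ Finset.univ.filter (fun j => ¬ 0 ≤ c j), (- c j) by simp, ← this]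
    rw [hA, hB, hPeq, hNeq]; ring
  have hu_memK : u ∈ K := by rwa [hKdef, LinearMap.mem_ker]
  -- coprimality of P' and N'
  have hcop : Int.gcd P' N' = 1 := by
    have := Int.gcd_div_gcd_div_gcd (i := P) (j := Nn)
      (by rw [Int.gcd_pos_iff]; exact Or.inl hP.ne')
    simpa [hP'def, hN'def, hddef] using this
  obtain ⟨a, bb, hab⟩ := Int.isCoprime_iff_gcd_eq_one.mpr hcop
  -- functional φ with φ u = 1
  set φ : (Fin r → ℤ) →ₗ[ℤ] ℤ := a • LinearMap.proj j₀ + bb • LinearMap.proj i₀ with hφdef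
  have hφapp : ∀ v : Fin r → ℤ, φ v = a * v j₀ + bb * v i₀ := by
    intro v; simp [hφdef, smul_eq_mul]
  have hφu : φ u = 1 := by
    rw [hφapp]
    simp only [hudef]
    rw [if_neg (by omega), if_pos hi₀.le]
    exact hab
  -- kernel of φ inside K
  set K₀ : Submodule ℤ K := LinearMap.ker (φ.comp K.subtype) with hK₀def
  obtain ⟨n₁, bK⟩ := Submodule.basisOfPid (Pi.basisFun ℤ (Fin r)) K
  obtain ⟨n₀, bK₀⟩ := Submodule.basisOfPid bK K₀
  set u' : K := ⟨u, hu_memK⟩ with hu'def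
  have hφK : ∀ x : K, x ∈ K₀ ↔ φ (x : Fin r → ℤ) = 0 := by
    intro x; rw [hK₀def, LinearMap.mem_ker, LinearMap.comp_apply, Submodule.subtype_apply]
  have hli₀ : ∀ (k : ℤ), ∀ x ∈ K₀, k • u' + x = 0 → k = 0 := by
    intro k x hx h
    have h2 := congrArg (fun z : K => φ (z : Fin r → ℤ)) h
    simp only [Submodule.coe_add, Submodule.coe_smul, map_add, map_smul, smul_eq_mul,
      ZeroMemClass.coe_zero, map_zero] at h2
    rw [(hφK x).mp hx, hφu] at h2
    simpa using h2
  have hsp₀ : ∀ z : K, ∃ k : ℤ, z + k • u' ∈ K₀ := by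
    intro z
    refine ⟨-φ (z : Fin r → ℤ), ?_⟩
    rw [hφK]
    simp only [Submodule.coe_add, Submodule.coe_smul, map_add, map_smul, smul_eq_mul]
    rw [hφu]; ring
  set CK : Module.Basis (Fin (n₀ + 1)) ℤ K := Module.Basis.mkFinCons u' bK₀ hli₀ hsp₀ with hCKdef
  have hCKcoe : ⇑CK = Fin.cons u' ((↑) ∘ bK₀) := by
    rw [hCKdef]; exact Module.Basis.coe_mkFinCons u' bK₀ hli₀ hsp₀
  have hCK0 : CK 0 = u' := by rw [hCKcoe]; simp
  have hCKsucc : ∀ i : Fin n₀, CK i.succ = (bK₀ i : K) := by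
    intro i; rw [hCKcoe]; simp
  -- generator of the range of F, and a preimage y
  set g : ℤ := Submodule.IsPrincipal.generator (LinearMap.range F) with hgdef
  have hgmem : g ∈ LinearMap.range F := Submodule.IsPrincipal.generator_mem _
  obtain ⟨y, hy⟩ := hgmem
  have hg0 : g ≠ 0 := by
    intro h0
    have hbot : LinearMap.range F = ⊥ := by
      rw [← Submodule.IsPrincipal.span_singleton_generator (LinearMap.range F), ← hgdef, h0,
        Submodule.span_singleton_eq_bot]
    have hmem : c i₀ ∈ LinearMap.range F := by
      refine ⟨Pi.single i₀ 1, ?_⟩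
      rw [hFapp]
      simp [Pi.single_apply, mul_ite]
    rw [hbot] at hmem
    simp only [Submodule.mem_bot] at hmem
    omega
  have hliY : ∀ (k : ℤ), ∀ x ∈ K, k • y + x = 0 → k = 0 := by
    intro k x hx h
    have h2 := congrArg F h
    rw [hKdef, LinearMap.mem_ker] at hx
    simp only [map_add, map_smul, smul_eq_mul, hy, hx, map_zero, add_zero] at h2
    exact (mul_eq_zero.mp h2).resolve_right hg0
  have hspY : ∀ z : Fin r → ℤ, ∃ k : ℤ, z + k • y ∈ K := by
    intro z
    have hz : F z ∈ LinearMap.range F := ⟨z, rfl⟩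
    rw [← Submodule.IsPrincipal.span_singleton_generator (LinearMap.range F), ← hgdef,
      Submodule.mem_span_singleton] at hz
    obtain ⟨s, hs⟩ := hz
    refine ⟨-s, ?_⟩
    rw [hKdef, LinearMap.mem_ker]
    simp only [map_add, map_smul, smul_eq_mul, hy]
    rw [← hs]
    simp [smul_eq_mul]
  set C : Module.Basis (Fin (n₀ + 1 + 1)) ℤ (Fin r → ℤ) := Module.Basis.mkFinCons y CK hliY hspY with hCdef
  have hCcoe : ⇑C = Fin.cons y ((↑) ∘ CK) := by
    rw [hCdef]; exact Module.Basis.coe_mkFinCons y CK hliY hspY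
  have hC0 : C 0 = y := by rw [hCcoe]; simp
  have hCsucc : ∀ i : Fin (n₀ + 1), C i.succ = (CK i : Fin r → ℤ) := by
    intro i; rw [hCcoe]; simp
  -- cardinality
  have hcard : n₀ + 1 + 1 = r := by
    have e := C.indexEquiv (Pi.basisFun ℤ (Fin r))
    simpa using Fintype.card_congr e
  -- reindex to Fin r, rotating so that the special vector y sits at the last index
  set e : Fin (n₀ + 1 + 1) ≃ Fin r := (finRotate (n₀ + 1 + 1)).symm.trans (finCongr hcard)
    with hedef
  set B₁ : Module.Basis (Fin r) ℤ (Fin r → ℤ) := C.reindex e with hB₁def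
  have hB₁app : ∀ t : Fin r, B₁ t = C (finRotate (n₀ + 1 + 1) (finCongr hcard.symm t)) := by
    intro t
    rw [hB₁def, Module.Basis.reindex_apply, hedef]
    congr 1
  have hB₁lt : ∀ t : Fin r, ∀ ht : (t : ℕ) < n₀ + 1, B₁ t = (CK ⟨t.val, ht⟩ : Fin r → ℤ) := by
    intro t ht
    rw [hB₁app]
    have hne : finCongr hcard.symm t ≠ Fin.last (n₀ + 1) := by
      intro h
      have h2 : (t : ℕ) = n₀ + 1 := by
        have h3 := congrArg Fin.val h
        simpa using h3
      omega
    have hval : finRotate (n₀ + 1 + 1) (finCongr hcard.symm t) = Fin.succ ⟨t.val, ht⟩ := by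
      apply Fin.ext
      rw [coe_finRotate_of_ne_last hne]
      simp
    rw [hval, hCsucc]
  have hB₁0 : B₁ 0 = u := by
    have h0 : ((0 : Fin r) : ℕ) < n₀ + 1 := by simp
    rw [hB₁lt 0 h0]
    have : (⟨(0 : Fin r).val, h0⟩ : Fin (n₀ + 1)) = 0 := by apply Fin.ext; simp
    rw [this, hCK0, hu'def]
  have hB₁mem : ∀ t : Fin r, (t : ℕ) < r - 1 → B₁ t ∈ K := by
    intro t ht
    have ht' : (t : ℕ) < n₀ + 1 := by omega
    rw [hB₁lt t ht']
    exact (CK ⟨t.val, ht'⟩).2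
  -- the shear making everything positive
  set m : Fin r → ℤ := fun t => if t = 0 then 0 else (∑ i, |B₁ t i|) + 1 with hmdef
  have hm0 : m 0 = 0 := by simp [hmdef]
  have hmnn : ∀ t, 0 ≤ m t := by
    intro t
    rw [hmdef]
    dsimp only
    split
    · exact le_refl 0
    · positivity
  set T : (Fin r → ℤ) →ₗ[ℤ] (Fin r → ℤ) := B₁.constr ℤ (fun t => B₁ t + m t • B₁ 0) with hTdef
  set T' : (Fin r → ℤ) →ₗ[ℤ] (Fin r → ℤ) := B₁.constr ℤ (fun t => B₁ t - m t • B₁ 0) with hT'def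
  have hTT' : T.comp T' = LinearMap.id := by
    apply B₁.ext; intro t
    rw [LinearMap.comp_apply, hT'def, Module.Basis.constr_basis, map_sub, map_smul, hTdef,
      Module.Basis.constr_basis, Module.Basis.constr_basis, hm0]
    simp only [zero_smul, add_zero, LinearMap.id_apply]
    abel
  have hT'T : T'.comp T = LinearMap.id := by
    apply B₁.ext; intro t
    rw [LinearMap.comp_apply, hTdef, Module.Basis.constr_basis, map_add, map_smul, hT'def,
      Module.Basis.constr_basis, Module.Basis.constr_basis, hm0]
    simp only [zero_smul, sub_zero, LinearMap.id_apply]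
    abel
  set Teq : (Fin r → ℤ) ≃ₗ[ℤ] (Fin r → ℤ) := LinearEquiv.ofLinear T T' hTT' hT'T with hTeqdef
  set Bf : Module.Basis (Fin r) ℤ (Fin r → ℤ) := B₁.map Teq with hBfdef
  have hBfapp : ∀ t, Bf t = B₁ t + m t • u := by
    intro t
    rw [hBfdef, Module.Basis.map_apply, hTeqdef, LinearEquiv.ofLinear_apply, hTdef,
      Module.Basis.constr_basis, hB₁0]
  set bfin : Fin r → Fin r → ℤ := fun t => B₁ t + m t • u with hbdef
  have hbeq : ∀ t, bfin t = B₁ t + m t • u := fun t => rfl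
  have hbapp : ∀ t i, bfin t i = B₁ t i + m t * u i := fun t i => rfl
  refine ⟨bfin, Bf, fun t => (hBfapp t).trans (hbeq t).symm, ?_, ?_, ?_⟩
  · -- positivity
    intro t i
    rw [hbapp]
    by_cases h0 : t = 0
    · subst h0
      rw [hm0, hB₁0]
      simp
      exact hu_pos i
    · have hm : m t = (∑ i, |B₁ t i|) + 1 := by rw [hmdef]; simp [h0]
      have h1 : |B₁ t i| ≤ ∑ i, |B₁ t i| :=
        Finset.single_le_sum (fun i _ => abs_nonneg (B₁ t i)) (Finset.mem_univ i)
      have h2 : m t * 1 ≤ m t * u i := mul_le_mul_of_nonneg_left (hu1 i) (hmnn t)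
      have h3 : -(B₁ t i) ≤ |B₁ t i| := neg_le_abs _
      linarith
  · -- kernel membership
    intro t ht
    have hF3 := hFapp (bfin t)
    rw [← hF3, hbeq]
    have h1 : F (B₁ t) = 0 := by
      have := hB₁mem t ht
      rwa [hKdef, LinearMap.mem_ker] at this
    rw [map_add, map_smul, h1, huF, smul_zero, add_zero]
  · -- spanning
    intro v hv
    have hvK : v ∈ K := by rw [hKdef, LinearMap.mem_ker, hFapp]; exact hv
    set S : Set (Fin r → ℤ) :=
      Set.range fun t : Fin (r - 1) => bfin (Fin.castLE (Nat.sub_le r 1) t) with hSdef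
    have hu_span : u ∈ Submodule.span ℤ S := by
      have h00 : (0 : ℕ) < r - 1 := by omega
      have hmem : bfin (Fin.castLE (Nat.sub_le r 1) ⟨0, h00⟩) ∈ S := ⟨⟨0, h00⟩, rfl⟩
      have hcast : Fin.castLE (Nat.sub_le r 1) (⟨0, h00⟩ : Fin (r - 1)) = (0 : Fin r) := by
        apply Fin.ext; simp
      rw [hcast, hbeq, hm0, zero_smul, add_zero, hB₁0] at hmem
      exact Submodule.subset_span hmem
    have hCK_span : ∀ j : Fin (n₀ + 1), (CK j : Fin r → ℤ) ∈ Submodule.span ℤ S := by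
      intro j
      have hj : (j : ℕ) < r - 1 := by omega
      set t : Fin r := Fin.castLE (Nat.sub_le r 1) (⟨j.val, hj⟩ : Fin (r - 1)) with htdef
      have ht' : (t : ℕ) < n₀ + 1 := by rw [htdef]; simp only [Fin.coe_castLE]; omega
      have hBt : B₁ t = (CK j : Fin r → ℤ) := by
        have hidx : (⟨t.val, ht'⟩ : Fin (n₀ + 1)) = j := by
          apply Fin.ext
          rfl
        rw [hB₁lt t ht', hidx]
      have hmem : bfin t ∈ S := ⟨⟨j.val, hj⟩, rfl⟩
      have : (CK j : Fin r → ℤ) = bfin t - m t • u := by rw [hbeq, hBt]; abel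
      rw [this]
      exact sub_mem (Submodule.subset_span hmem)
        (Submodule.smul_mem _ _ hu_span)
    -- v lies in the span of the CK vectors
    have hvtop : (⟨v, hvK⟩ : K) ∈ (⊤ : Submodule ℤ K) := trivial
    rw [← CK.span_eq] at hvtop
    have h2 := Submodule.mem_map_of_mem (f := K.subtype) hvtop
    rw [Submodule.map_span, ← Set.range_comp] at h2
    have h3 : Set.range (K.subtype ∘ CK) ⊆ (Submodule.span ℤ S : Set (Fin r → ℤ)) := by
      rintro x ⟨j, rfl⟩
      exact hCK_span j
    exact Submodule.span_le.mpr h3 h2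
end

section
/- Let K be an algebraically closed field, let n ≥ 1 and ℓ ≥ 2 be integers, and set m = 2ℓ. Let a, a' : {0,…,m} → K be coefficient tuples such that a_i ≠ 0 for all i with ℓ+2 ≤ i ≤ 2ℓ and a_{ℓ−1} ≠ 0, and likewise a'_i ≠ 0 for all ℓ+2 ≤ i ≤ 2ℓ and a'_{ℓ−1} ≠ 0. Suppose there is a nonzero c ∈ K such that: a'_ℓ = c·a_ℓ; a'_{2ℓ−j}·a'_j = c²·a_{2ℓ−j}·a_j for all 0 ≤ j ≤ ℓ−1; and a'_{ℓ+i}·(a'_{ℓ−1})^i = c^{i+1}·a_{ℓ+i}·(a_{ℓ−1})^i for all 2 ≤ i ≤ ℓ. Then there exist nonzero λ, μ, e ∈ K such that a'_i = e·λ^{i·n}·μ^{(m−i)·n}·a_i for all 0 ≤ i ≤ m. -/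
/-- Generic reconstruction from the arithmetic diagonal invariants: if two
coefficient tuples `a, a' : {0, …, 2ℓ} → K` of binary forms in normal form are
generic (suitable coefficients nonzero) and their generic arithmetic diagonal
invariants `J₁ = a_ℓ`, `J_{2,j} = a_{2ℓ-j}·a_j`, `J_{i} = a_{ℓ+i}·a_{ℓ-1}^i`
agree up to rescaling by powers `c^(weight)` of some nonzero `c ∈ K`, then the
tuples are related by the action of a diagonal matrix up to a scalar. -/
theorem stmt7 {K : Type*} [Field K] [IsAlgClosed K] (n ℓ : ℕ) (hn : 1 ≤ n)
    (hℓ : 2 ≤ ℓ) (a a' : ℕ → K)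
    (ha1 : ∀ i, ℓ + 2 ≤ i → i ≤ 2 * ℓ → a i ≠ 0) (ha2 : a (ℓ - 1) ≠ 0)
    (ha1' : ∀ i, ℓ + 2 ≤ i → i ≤ 2 * ℓ → a' i ≠ 0) (ha2' : a' (ℓ - 1) ≠ 0)
    (c : K) (hc : c ≠ 0)
    (hJ1 : a' ℓ = c * a ℓ)
    (hJ2 : ∀ j ≤ ℓ - 1, a' (2 * ℓ - j) * a' j = c ^ 2 * (a (2 * ℓ - j) * a j))
    (hJi : ∀ i, 2 ≤ i → i ≤ ℓ →
      a' (ℓ + i) * a' (ℓ - 1) ^ i = c ^ (i + 1) * (a (ℓ + i) * a (ℓ - 1) ^ i)) :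
    ∃ lam mu e : K, lam ≠ 0 ∧ mu ≠ 0 ∧ e ≠ 0 ∧
      ∀ i ≤ 2 * ℓ, a' i = e * (lam ^ (i * n) * mu ^ ((2 * ℓ - i) * n) * a i) := by
  set r := a (ℓ - 1) with hr
  set s := a' (ℓ - 1) with hs
  set u : K := c * r / s with hu
  have hune : u ≠ 0 := by
    apply div_ne_zero (mul_ne_zero hc ha2) ha2'
  set E : K := c * (s / (c * r))^ℓ with hE
  have hEne : E ≠ 0 := by
    exact mul_ne_zero hc (pow_ne_zero _ (div_ne_zero ha2' (mul_ne_zero hc ha2)))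
  have hEu : E * u ^ ℓ = c := by
    rw [hE, hu, mul_assoc, ← mul_pow]
    field_simp
    exact one_pow ℓ
  -- upper half ratios: a' (ℓ + k) = c * u^k * a (ℓ + k) for k ≤ ℓ
  have upper : ∀ k ≤ ℓ, a' (ℓ + k) = c * u ^ k * a (ℓ + k) := by
    intro k hk
    rcases Nat.lt_or_ge k 2 with hk2 | hk2
    · interval_cases k
      · simpa using hJ1
      · have h2 := hJ2 (ℓ - 1) le_rfl
        have he : 2 * ℓ - (ℓ - 1) = ℓ + 1 := by omega
        rw [he] at h2
        have hd : a' (ℓ + 1) = c ^ 2 * (a (ℓ + 1) * r) / s := by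
          rw [eq_div_iff ha2']; exact h2
        rw [hd, hu]
        field_simp
    · have h := hJi k hk2 hk
      have hd : a' (ℓ + k) = c ^ (k + 1) * (a (ℓ + k) * r ^ k) / s ^ k := by
        rw [eq_div_iff (pow_ne_zero _ ha2')]; exact h
      rw [hd, hu, div_pow]
      field_simp
      ring
  -- lower half: a' (ℓ - k) * u^k = c * a (ℓ - k) for k ≤ ℓ
  have lower : ∀ k ≤ ℓ, a' (ℓ - k) * u ^ k = c * a (ℓ - k) := by
    intro k hk
    rcases Nat.lt_or_ge k 2 with hk2 | hk2
    · interval_cases k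
      · simpa using hJ1
      · show s * u ^ 1 = c * r
        rw [hu, pow_one]
        field_simp
    · have h2 := hJ2 (ℓ - k) (by omega)
      have he : 2 * ℓ - (ℓ - k) = ℓ + k := by omega
      rw [he] at h2
      rw [upper k hk] at h2
      have hak : a (ℓ + k) ≠ 0 := ha1 _ (by omega) (by omega)
      exact mul_left_cancel₀ (mul_ne_zero hc hak)
        (by linear_combination h2)
  -- key formula
  have key : ∀ i ≤ 2 * ℓ, a' i = E * u ^ i * a i := by
    intro i hi
    rcases Nat.lt_or_ge i ℓ with h | h
    · have hk : i = ℓ - (ℓ - i) := by omega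
      have hkl : ℓ - i ≤ ℓ := by omega
      have hl := lower (ℓ - i) hkl
      rw [← hk] at hl
      have hupow : u ^ ℓ = u ^ i * u ^ (ℓ - i) := by
        have h5 : i + (ℓ - i) = ℓ := by omega
        rw [← pow_add, h5]
      have heq : a' i * u ^ (ℓ - i) = (E * u ^ i * a i) * u ^ (ℓ - i) := by
        rw [hl, ← hEu, hupow]; ring
      exact mul_right_cancel₀ (pow_ne_zero _ hune) heq
    · have hk : i = ℓ + (i - ℓ) := by omega
      have hup := upper (i - ℓ) (by omega)
      rw [← hk] at hup
      rw [hup]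
      have hupow : u ^ i = u ^ ℓ * u ^ (i - ℓ) := by
        have h5 : ℓ + (i - ℓ) = i := by omega
        rw [← pow_add, h5]
      rw [hupow]
      linear_combination -(a i * u ^ (i - ℓ)) * hEu
  -- choose lam as an n-th root of u
  obtain ⟨lam, hlam⟩ := IsAlgClosed.exists_pow_nat_eq (k := K) u (by omega : 0 < n)
  refine ⟨lam, 1, E, ?_, one_ne_zero, hEne, ?_⟩
  · intro h0
    rw [h0, zero_pow (by omega)] at hlam
    exact hune hlam.symm
  · intro i hi
    rw [key i hi, one_pow, mul_comm i n, pow_mul, hlam]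
    ring
end

section
/- Let K be an algebraically closed field of characteristic different from 2, let n ≥ 1 and ℓ ≥ 2 be integers, and set m = 2ℓ. For a coefficient tuple a : {0,…,m} → K and 3 ≤ i ≤ ℓ+1, write J_i(a) = a_{ℓ+i−1}·(a_{ℓ−1})^{i−1} and J'_i(a) = a_{ℓ+1−i}·(a_{ℓ+1})^{i−1}. Let a, a' : {0,…,m} → K be tuples such that: either (a_i ≠ 0 for all ℓ+1 ≤ i ≤ 2ℓ and a_{ℓ−1} ≠ 0) or (a_i ≠ 0 for all 0 ≤ i ≤ ℓ−1 and a_{ℓ+1} ≠ 0), and the same alternative holds for a'. Suppose there is a nonzero c ∈ K such that: a'_ℓ = c·a_ℓ; a'_{2ℓ−j}·a'_j = c²·a_{2ℓ−j}·a_j for all 0 ≤ j ≤ ℓ−1; J_i(a') + J'_i(a') = c^i·(J_i(a) + J'_i(a)) and J_i(a')·J'_i(a') = c^{2i}·J_i(a)·J'_i(a) for all 3 ≤ i ≤ ℓ+1; and J_i(a')·J'_j(a') + J'_i(a')·J_j(a') = c^{i+j}·(J_i(a)·J'_j(a) + J'_i(a)·J_j(a)) for all 3 ≤ i < j ≤ ℓ+1.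 Then there exist nonzero λ, μ, e ∈ K such that either a'_i = e·λ^{i·n}·μ^{(m−i)·n}·a_i for all 0 ≤ i ≤ m, or a'_i = e·λ^{i·n}·μ^{(m−i)·n}·a_{m−i} for all 0 ≤ i ≤ m. -/
/-- The arithmetic diagonal invariant `J_i(a) = a_{ℓ+i-1} · a_{ℓ-1}^(i-1)`. -/
def dihedralJ {K : Type*} [Field K] (ℓ : ℕ) (a : ℕ → K) (i : ℕ) : K :=
  a (ℓ + i - 1) * a (ℓ - 1) ^ (i - 1)

/-- The conjugate arithmetic diagonal invariant `J'_i(a) = a_{ℓ+1-i} · a_{ℓ+1}^(i-1)`. -/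
def dihedralJ' {K : Type*} [Field K] (ℓ : ℕ) (a : ℕ → K) (i : ℕ) : K :=
  a (ℓ + 1 - i) * a (ℓ + 1) ^ (i - 1)

/-- Core reconstruction: if the upper half of `a'` is generic and the `J`-type relations
`a'_{ℓ+i-1} (a'_{ℓ-1})^{i-1} = c^i a_{ℓ+i-1} (a_{ℓ-1})^{i-1}` hold together with the
degree-1 and degree-2 relations, then `a'` is a geometric rescaling of `a`. -/
lemma dihedral_core {K : Type*} [Field K] (ℓ : ℕ) (hℓ : 2 ≤ ℓ) (a a' : ℕ → K)
    (hup : ∀ i, ℓ + 1 ≤ i → i ≤ 2 * ℓ → a' i ≠ 0) (hm1 : a' (ℓ - 1) ≠ 0)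
    (c : K) (hc : c ≠ 0)
    (hI1 : a' ℓ = c * a ℓ)
    (hI2 : ∀ j ≤ ℓ - 1, a' (2 * ℓ - j) * a' j = c ^ 2 * (a (2 * ℓ - j) * a j))
    (hP : ∀ i, 3 ≤ i → i ≤ ℓ + 1 →
      a' (ℓ + i - 1) * a' (ℓ - 1) ^ (i - 1) = c ^ i * (a (ℓ + i - 1) * a (ℓ - 1) ^ (i - 1))) :
    ∃ r : K, r ≠ 0 ∧ ∀ k ≤ 2 * ℓ, a' k * r ^ ℓ = c * r ^ k * a k := by
  have hI2top := hI2 (ℓ - 1) le_rfl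
  rw [show 2 * ℓ - (ℓ - 1) = ℓ + 1 from by omega] at hI2top
  have hl1 : a' (ℓ + 1) ≠ 0 := hup _ le_rfl (by omega)
  have ha1 : a (ℓ - 1) ≠ 0 := by
    intro h
    rw [h] at hI2top
    simp only [mul_zero] at hI2top
    exact mul_ne_zero hl1 hm1 hI2top
  refine ⟨c * a (ℓ - 1) / a' (ℓ - 1), div_ne_zero (mul_ne_zero hc ha1) hm1, ?_⟩
  set r := c * a (ℓ - 1) / a' (ℓ - 1) with hrdef
  have hupf : ∀ s ≤ ℓ, a' (ℓ + s) = c * r ^ s * a (ℓ + s) := by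
    intro s hs
    match s with
    | 0 => simpa using hI1
    | 1 =>
      rw [hrdef]
      field_simp
      linear_combination hI2top
    | (t + 2) =>
      have h := hP (t + 3) (by omega) (by omega)
      rw [show ℓ + (t + 3) - 1 = ℓ + (t + 2) from by omega,
        show t + 3 - 1 = t + 2 from by omega] at h
      apply mul_right_cancel₀ (pow_ne_zero (t + 2) hm1)
      rw [h, hrdef, div_pow]
      field_simp
      ring
  intro k hk
  by_cases hkl : ℓ ≤ k
  · have h := hupf (k - ℓ) (by omega)
    rw [show ℓ + (k - ℓ) = k from by omega] at h
    calc a' k * r ^ ℓ = c * (r ^ (k - ℓ) * r ^ ℓ) * a k := by rw [h]; ring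
      _ = c * r ^ k * a k := by rw [← pow_add, show k - ℓ + ℓ = k from by omega]
  · push_neg at hkl
    have h2 := hupf (ℓ - k) (by omega)
    rw [show ℓ + (ℓ - k) = 2 * ℓ - k from by omega] at h2
    have hane : a (2 * ℓ - k) ≠ 0 := by
      intro h
      apply hup (2 * ℓ - k) (by omega) (by omega)
      rw [h2, h, mul_zero]
    have h1 := hI2 k (by omega)
    rw [h2] at h1
    have key : a' k * r ^ (ℓ - k) = c * a k := by
      apply mul_left_cancel₀ (mul_ne_zero hc hane)
      linear_combination h1
    calc a' k * r ^ ℓ = (a' k * r ^ (ℓ - k)) * r ^ k := by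
          rw [mul_assoc, ← pow_add, show ℓ - k + k = ℓ from by omega]
      _ = c * r ^ k * a k := by rw [key]; ring

/-- Quadratic dichotomy: if `x + y = S(u + v)` and `xy = S²·uv` then
`{x, y} = {Su, Sv}`. -/
lemma dihedral_dich {K : Type*} [Field K] (S x y u v : K)
    (h1 : x + y = S * (u + v)) (h2 : x * y = S ^ 2 * (u * v)) :
    (x = S * u ∧ y = S * v) ∨ (x = S * v ∧ y = S * u) := by
  have h0 : (x - S * u) * (x - S * v) = 0 := by linear_combination x * h1 - h2
  rcases mul_eq_zero.mp h0 with h | h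
  · left
    have hx : x = S * u := sub_eq_zero.mp h
    exact ⟨hx, by linear_combination h1 - hx⟩
  · right
    have hx : x = S * v := sub_eq_zero.mp h
    exact ⟨hx, by linear_combination h1 - hx⟩

/-- Alignment: the equalities of symmetric functions of `(J_i, J'_i)` force a uniform
choice of branch for all `i`. -/
lemma dihedral_align {K : Type*} [Field K] (ℓ : ℕ) (a a' : ℕ → K) (c : K) (hc : c ≠ 0)
    (hIii1 : ∀ i, 3 ≤ i → i ≤ ℓ + 1 →
      dihedralJ ℓ a' i + dihedralJ' ℓ a' i = c ^ i * (dihedralJ ℓ a i + dihedralJ' ℓ a i))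
    (hIii2 : ∀ i, 3 ≤ i → i ≤ ℓ + 1 →
      dihedralJ ℓ a' i * dihedralJ' ℓ a' i = c ^ (2 * i) * (dihedralJ ℓ a i * dihedralJ' ℓ a i))
    (hIij : ∀ i j, 3 ≤ i → i < j → j ≤ ℓ + 1 →
      dihedralJ ℓ a' i * dihedralJ' ℓ a' j + dihedralJ' ℓ a' i * dihedralJ ℓ a' j
        = c ^ (i + j) *
          (dihedralJ ℓ a i * dihedralJ' ℓ a j + dihedralJ' ℓ a i * dihedralJ ℓ a j)) :
    (∀ i, 3 ≤ i → i ≤ ℓ + 1 →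
      dihedralJ ℓ a' i = c ^ i * dihedralJ ℓ a i ∧ dihedralJ' ℓ a' i = c ^ i * dihedralJ' ℓ a i) ∨
    (∀ i, 3 ≤ i → i ≤ ℓ + 1 →
      dihedralJ ℓ a' i = c ^ i * dihedralJ' ℓ a i ∧ dihedralJ' ℓ a' i = c ^ i * dihedralJ ℓ a i) := by
  have dich : ∀ i, 3 ≤ i → i ≤ ℓ + 1 →
      (dihedralJ ℓ a' i = c ^ i * dihedralJ ℓ a i ∧ dihedralJ' ℓ a' i = c ^ i * dihedralJ' ℓ a i) ∨
      (dihedralJ ℓ a' i = c ^ i * dihedralJ' ℓ a i ∧ dihedralJ' ℓ a' i = c ^ i * dihedralJ ℓ a i) := by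
    intro i h1 h2
    apply dihedral_dich (c ^ i) _ _ _ _ (hIii1 i h1 h2)
    rw [hIii2 i h1 h2]; ring
  by_cases hall : ∀ i, 3 ≤ i → i ≤ ℓ + 1 →
      dihedralJ ℓ a' i = c ^ i * dihedralJ ℓ a i ∧ dihedralJ' ℓ a' i = c ^ i * dihedralJ' ℓ a i
  · exact Or.inl hall
  · right
    push_neg at hall
    obtain ⟨i₀, hi₀1, hi₀2, hi₀3'⟩ := hall
    have hi₀3 : ¬(dihedralJ ℓ a' i₀ = c ^ i₀ * dihedralJ ℓ a i₀ ∧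
        dihedralJ' ℓ a' i₀ = c ^ i₀ * dihedralJ' ℓ a i₀) := fun h => hi₀3' h.1 h.2
    have hBi₀ : dihedralJ ℓ a' i₀ = c ^ i₀ * dihedralJ' ℓ a i₀ ∧
        dihedralJ' ℓ a' i₀ = c ^ i₀ * dihedralJ ℓ a i₀ := by
      rcases dich i₀ hi₀1 hi₀2 with h | h
      · exact absurd h hi₀3
      · exact h
    have hnei₀ : dihedralJ ℓ a i₀ ≠ dihedralJ' ℓ a i₀ := by
      intro he
      exact hi₀3 ⟨by rw [hBi₀.1, he], by rw [hBi₀.2, he]⟩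
    intro j hj1 hj2
    rcases dich j hj1 hj2 with hAj | hBj
    · by_cases hej : dihedralJ ℓ a j = dihedralJ' ℓ a j
      · exact ⟨by rw [hAj.1, hej], by rw [hAj.2, hej]⟩
      · exfalso
        rcases lt_trichotomy i₀ j with hlt | heq | hlt
        · have hx := hIij i₀ j hi₀1 hlt hj2
          rw [hBi₀.1, hBi₀.2, hAj.1, hAj.2] at hx
          have hz : (dihedralJ ℓ a i₀ - dihedralJ' ℓ a i₀) *
              (dihedralJ ℓ a j - dihedralJ' ℓ a j) = 0 := by
            apply mul_left_cancel₀ (pow_ne_zero (i₀ + j) hc)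
            rw [mul_zero]
            linear_combination hx
          rcases mul_eq_zero.mp hz with h | h
          · exact hnei₀ (sub_eq_zero.mp h)
          · exact hej (sub_eq_zero.mp h)
        · rw [heq] at hi₀3; exact hi₀3 hAj
        · have hx := hIij j i₀ hj1 hlt hi₀2
          rw [hBi₀.1, hBi₀.2, hAj.1, hAj.2] at hx
          have hz : (dihedralJ ℓ a i₀ - dihedralJ' ℓ a i₀) *
              (dihedralJ ℓ a j - dihedralJ' ℓ a j) = 0 := by
            apply mul_left_cancel₀ (pow_ne_zero (j + i₀) hc)
            rw [mul_zero]
            linear_combination hx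
          rcases mul_eq_zero.mp hz with h | h
          · exact hnei₀ (sub_eq_zero.mp h)
          · exact hej (sub_eq_zero.mp h)
    · exact hBj

/-- Main intermediate step: assuming the upper half of `a'` is generic, the invariant
relations force `a'` to be a geometric rescaling of either `a` or its swap. -/
lemma dihedral_main {K : Type*} [Field K] (ℓ : ℕ) (hℓ : 2 ≤ ℓ) (a a' : ℕ → K)
    (hup : ∀ i, ℓ + 1 ≤ i → i ≤ 2 * ℓ → a' i ≠ 0) (hm1 : a' (ℓ - 1) ≠ 0)
    (c : K) (hc : c ≠ 0)
    (hI1 : a' ℓ = c * a ℓ)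
    (hI2 : ∀ j ≤ ℓ - 1, a' (2 * ℓ - j) * a' j = c ^ 2 * (a (2 * ℓ - j) * a j))
    (hIii1 : ∀ i, 3 ≤ i → i ≤ ℓ + 1 →
      dihedralJ ℓ a' i + dihedralJ' ℓ a' i = c ^ i * (dihedralJ ℓ a i + dihedralJ' ℓ a i))
    (hIii2 : ∀ i, 3 ≤ i → i ≤ ℓ + 1 →
      dihedralJ ℓ a' i * dihedralJ' ℓ a' i = c ^ (2 * i) * (dihedralJ ℓ a i * dihedralJ' ℓ a i))
    (hIij : ∀ i j, 3 ≤ i → i < j → j ≤ ℓ + 1 →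
      dihedralJ ℓ a' i * dihedralJ' ℓ a' j + dihedralJ' ℓ a' i * dihedralJ ℓ a' j
        = c ^ (i + j) *
          (dihedralJ ℓ a i * dihedralJ' ℓ a j + dihedralJ' ℓ a i * dihedralJ ℓ a j)) :
    ∃ r : K, r ≠ 0 ∧ ((∀ k ≤ 2 * ℓ, a' k * r ^ ℓ = c * r ^ k * a k) ∨
      (∀ k ≤ 2 * ℓ, a' k * r ^ ℓ = c * r ^ k * a (2 * ℓ - k))) := by
  rcases dihedral_align ℓ a a' c hc hIii1 hIii2 hIij with hA | hB
  · obtain ⟨r, hr, h⟩ := dihedral_core ℓ hℓ a a' hup hm1 c hc hI1 hI2 (fun i h1 h2 => by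
      have h := (hA i h1 h2).1
      simpa [dihedralJ] using h)
    exact ⟨r, hr, Or.inl h⟩
  · obtain ⟨r, hr, h⟩ := dihedral_core ℓ hℓ (fun k => a (2 * ℓ - k)) a' hup hm1 c hc
      (by show a' ℓ = c * a (2 * ℓ - ℓ); rw [show 2 * ℓ - ℓ = ℓ from by omega]; exact hI1)
      (fun j hj => by
        show a' (2 * ℓ - j) * a' j = c ^ 2 * (a (2 * ℓ - (2 * ℓ - j)) * a (2 * ℓ - j))
        rw [show 2 * ℓ - (2 * ℓ - j) = j from by omega, hI2 j hj]
        ring)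
      (fun i h1 h2 => by
        have h := (hB i h1 h2).1
        simp only [dihedralJ, dihedralJ'] at h
        show a' (ℓ + i - 1) * a' (ℓ - 1) ^ (i - 1)
          = c ^ i * (a (2 * ℓ - (ℓ + i - 1)) * a (2 * ℓ - (ℓ - 1)) ^ (i - 1))
        rw [show 2 * ℓ - (ℓ + i - 1) = ℓ + 1 - i from by omega,
          show 2 * ℓ - (ℓ - 1) = ℓ + 1 from by omega]
        exact h)
    exact ⟨r, hr, Or.inr h⟩

/-- Conversion of a geometric rescaling `a'_k r^ℓ = c r^k b_k` into the diagonal form. -/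
lemma dihedral_conv {K : Type*} [Field K] [IsAlgClosed K] (n ℓ : ℕ) (hn : 1 ≤ n)
    (c r : K) (hc : c ≠ 0) (hr : r ≠ 0) (a' b : ℕ → K)
    (h : ∀ k ≤ 2 * ℓ, a' k * r ^ ℓ = c * r ^ k * b k) :
    ∃ lam mu e : K, lam ≠ 0 ∧ mu ≠ 0 ∧ e ≠ 0 ∧
      ∀ i ≤ 2 * ℓ, a' i = e * (lam ^ (i * n) * mu ^ ((2 * ℓ - i) * n) * b i) := by
  obtain ⟨lam, hlam⟩ := IsAlgClosed.exists_pow_nat_eq r (n := n) (by omega)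
  have hlne : lam ≠ 0 := by
    intro h0; rw [h0, zero_pow (by omega)] at hlam; exact hr hlam.symm
  refine ⟨lam, 1, c / r ^ ℓ, hlne, one_ne_zero, div_ne_zero hc (pow_ne_zero _ hr), ?_⟩
  intro i hi
  have hrl : r ^ ℓ ≠ 0 := pow_ne_zero _ hr
  have hpow : lam ^ (i * n) = r ^ i := by rw [mul_comm, pow_mul, hlam]
  rw [hpow, one_pow]
  field_simp
  linear_combination h i hi

/-- Conversion of a geometric rescaling `a'_k r^ℓ = c r^(2ℓ-k) b_k` into diagonal form. -/
lemma dihedral_conv' {K : Type*} [Field K] [IsAlgClosed K] (n ℓ : ℕ) (hn : 1 ≤ n)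
    (c r : K) (hc : c ≠ 0) (hr : r ≠ 0) (a' b : ℕ → K)
    (h : ∀ k ≤ 2 * ℓ, a' k * r ^ ℓ = c * r ^ (2 * ℓ - k) * b k) :
    ∃ lam mu e : K, lam ≠ 0 ∧ mu ≠ 0 ∧ e ≠ 0 ∧
      ∀ i ≤ 2 * ℓ, a' i = e * (lam ^ (i * n) * mu ^ ((2 * ℓ - i) * n) * b i) := by
  obtain ⟨mu, hmu⟩ := IsAlgClosed.exists_pow_nat_eq r (n := n) (by omega)
  have hmne : mu ≠ 0 := by
    intro h0; rw [h0, zero_pow (by omega)] at hmu; exact hr hmu.symm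
  refine ⟨1, mu, c / r ^ ℓ, one_ne_zero, hmne, div_ne_zero hc (pow_ne_zero _ hr), ?_⟩
  intro i hi
  have hrl : r ^ ℓ ≠ 0 := pow_ne_zero _ hr
  have hpow : mu ^ ((2 * ℓ - i) * n) = r ^ (2 * ℓ - i) := by rw [mul_comm, pow_mul, hmu]
  rw [hpow, one_pow]
  field_simp
  linear_combination h i hi

/-- Generic reconstruction from the arithmetic dihedral invariants: if two generic
coefficient tuples of binary forms in normal form have the same generic arithmetic
dihedral invariants (up to rescaling by `c^(weight)` for a nonzero `c`), then they
are related, up to a scalar, either by a diagonal matrix or by a diagonal matrix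
composed with the swap `a_i ↦ a_{2ℓ-i}`. -/
theorem stmt8 {K : Type*} [Field K] [IsAlgClosed K] (hchar : ringChar K ≠ 2)
    (n ℓ : ℕ) (hn : 1 ≤ n) (hℓ : 2 ≤ ℓ) (a a' : ℕ → K)
    (hA : ((∀ i, ℓ + 1 ≤ i → i ≤ 2 * ℓ → a i ≠ 0) ∧ a (ℓ - 1) ≠ 0) ∨
          ((∀ i ≤ ℓ - 1, a i ≠ 0) ∧ a (ℓ + 1) ≠ 0))
    (hA' : ((∀ i, ℓ + 1 ≤ i → i ≤ 2 * ℓ → a' i ≠ 0) ∧ a' (ℓ - 1) ≠ 0) ∨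
           ((∀ i ≤ ℓ - 1, a' i ≠ 0) ∧ a' (ℓ + 1) ≠ 0))
    (c : K) (hc : c ≠ 0)
    (hI1 : a' ℓ = c * a ℓ)
    (hI2 : ∀ j ≤ ℓ - 1, a' (2 * ℓ - j) * a' j = c ^ 2 * (a (2 * ℓ - j) * a j))
    (hIii1 : ∀ i, 3 ≤ i → i ≤ ℓ + 1 →
      dihedralJ ℓ a' i + dihedralJ' ℓ a' i
        = c ^ i * (dihedralJ ℓ a i + dihedralJ' ℓ a i))
    (hIii2 : ∀ i, 3 ≤ i → i ≤ ℓ + 1 →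
      dihedralJ ℓ a' i * dihedralJ' ℓ a' i
        = c ^ (2 * i) * (dihedralJ ℓ a i * dihedralJ' ℓ a i))
    (hIij : ∀ i j, 3 ≤ i → i < j → j ≤ ℓ + 1 →
      dihedralJ ℓ a' i * dihedralJ' ℓ a' j + dihedralJ' ℓ a' i * dihedralJ ℓ a' j
        = c ^ (i + j) *
          (dihedralJ ℓ a i * dihedralJ' ℓ a j + dihedralJ' ℓ a i * dihedralJ ℓ a j)) :
    ∃ lam mu e : K, lam ≠ 0 ∧ mu ≠ 0 ∧ e ≠ 0 ∧
      ((∀ i ≤ 2 * ℓ, a' i = e * (lam ^ (i * n) * mu ^ ((2 * ℓ - i) * n) * a i)) ∨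
       (∀ i ≤ 2 * ℓ,
          a' i = e * (lam ^ (i * n) * mu ^ ((2 * ℓ - i) * n) * a (2 * ℓ - i)))) := by
  rcases hA' with ⟨hup, hm1⟩ | ⟨hlow, hp1⟩
  · obtain ⟨r, hr, hor⟩ := dihedral_main ℓ hℓ a a' hup hm1 c hc hI1 hI2 hIii1 hIii2 hIij
    rcases hor with h | h
    · obtain ⟨lam, mu, e, h1, h2, h3, h4⟩ := dihedral_conv n ℓ hn c r hc hr a' a h
      exact ⟨lam, mu, e, h1, h2, h3, Or.inl h4⟩
    · obtain ⟨lam, mu, e, h1, h2, h3, h4⟩ :=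
        dihedral_conv n ℓ hn c r hc hr a' (fun k => a (2 * ℓ - k)) h
      exact ⟨lam, mu, e, h1, h2, h3, Or.inr h4⟩
  · -- `a'` is generic in its lower half; work with the swapped tuple `b' k = a' (2ℓ - k)`.
    have hup' : ∀ i, ℓ + 1 ≤ i → i ≤ 2 * ℓ → (fun k => a' (2 * ℓ - k)) i ≠ 0 :=
      fun i hi1 hi2 => hlow (2 * ℓ - i) (by omega)
    have hm1' : (fun k => a' (2 * ℓ - k)) (ℓ - 1) ≠ 0 := by
      show a' (2 * ℓ - (ℓ - 1)) ≠ 0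
      rw [show 2 * ℓ - (ℓ - 1) = ℓ + 1 from by omega]
      exact hp1
    have hswJ : ∀ i, 3 ≤ i → i ≤ ℓ + 1 →
        dihedralJ ℓ (fun k => a' (2 * ℓ - k)) i = dihedralJ' ℓ a' i := by
      intro i h1 h2
      show a' (2 * ℓ - (ℓ + i - 1)) * a' (2 * ℓ - (ℓ - 1)) ^ (i - 1) = _
      rw [show 2 * ℓ - (ℓ + i - 1) = ℓ + 1 - i from by omega,
        show 2 * ℓ - (ℓ - 1) = ℓ + 1 from by omega]
      rfl
    have hswJ' : ∀ i, 3 ≤ i → i ≤ ℓ + 1 →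
        dihedralJ' ℓ (fun k => a' (2 * ℓ - k)) i = dihedralJ ℓ a' i := by
      intro i h1 h2
      show a' (2 * ℓ - (ℓ + 1 - i)) * a' (2 * ℓ - (ℓ + 1)) ^ (i - 1) = _
      rw [show 2 * ℓ - (ℓ + 1 - i) = ℓ + i - 1 from by omega,
        show 2 * ℓ - (ℓ + 1) = ℓ - 1 from by omega]
      rfl
    obtain ⟨r, hr, hor⟩ := dihedral_main ℓ hℓ a (fun k => a' (2 * ℓ - k)) hup' hm1' c hc
      (by show a' (2 * ℓ - ℓ) = c * a ℓ; rw [show 2 * ℓ - ℓ = ℓ from by omega]; exact hI1)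
      (fun j hj => by
        show a' (2 * ℓ - (2 * ℓ - j)) * a' (2 * ℓ - j) = _
        rw [show 2 * ℓ - (2 * ℓ - j) = j from by omega, ← hI2 j hj]
        ring)
      (fun i h1 h2 => by rw [hswJ i h1 h2, hswJ' i h1 h2]; linear_combination hIii1 i h1 h2)
      (fun i h1 h2 => by rw [hswJ i h1 h2, hswJ' i h1 h2]; linear_combination hIii2 i h1 h2)
      (fun i j h1 h2 h3 => by
        rw [hswJ i h1 (by omega), hswJ' i h1 (by omega), hswJ j (by omega) h3,
          hswJ' j (by omega) h3]
        linear_combination hIij i j h1 h2 h3)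
    rcases hor with h | h
    · -- a' (2ℓ-k) * r^ℓ = c r^k a k : this is the swap branch.
      have h' : ∀ i ≤ 2 * ℓ, a' i * r ^ ℓ = c * r ^ (2 * ℓ - i) * a (2 * ℓ - i) := by
        intro i hi
        have hh := h (2 * ℓ - i) (by omega)
        rw [show 2 * ℓ - (2 * ℓ - i) = i from by omega] at hh
        exact hh
      obtain ⟨lam, mu, e, h1, h2, h3, h4⟩ :=
        dihedral_conv' n ℓ hn c r hc hr a' (fun i => a (2 * ℓ - i)) h'
      exact ⟨lam, mu, e, h1, h2, h3, Or.inr h4⟩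
    · -- a' (2ℓ-k) * r^ℓ = c r^k a (2ℓ-k) : this is the diagonal branch.
      have h' : ∀ i ≤ 2 * ℓ, a' i * r ^ ℓ = c * r ^ (2 * ℓ - i) * a i := by
        intro i hi
        have hh := h (2 * ℓ - i) (by omega)
        rw [show 2 * ℓ - (2 * ℓ - i) = i from by omega] at hh
        exact hh
      obtain ⟨lam, mu, e, h1, h2, h3, h4⟩ := dihedral_conv' n ℓ hn c r hc hr a' a h'
      exact ⟨lam, mu, e, h1, h2, h3, Or.inl h4⟩
end
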